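/- Let Δ = σ + 4m, and let P = (x,y) be an algebraic point of the Pell conic with denominator A = den(y) and ratio β (so (x−βy)/A is an algebraic integer and A² | Q₀(β,1)). Suppose there exist rational integers t,u with A²t² + (2β+σ)tu + (Q₀(β,1)/A²)u² = 1. Then P ⊖ ((A²t+βu)/A, u/A) is an algebraic integer point of the Pell conic, i.e. P differs from a rational point of the conic by a point with algebraic-integer coordinates. -/

import Mathlib

/-- `den α = d` iff `d` is the least positive rational integer such that `d • α`
is an algebraic integer. -/
def IsDenominator (α : ℂ) (d : ℕ) : Prop :=
  IsLeast {n : ℕ | 0 < n ∧ IsIntegral ℤ ((n : ℂ) * α)} d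

/-- If `P = (x,y)` is an algebraic point of the Pell conic with denominator
`A = den(y)` and ratio `β`, and the form `(A², 2β+σ, Q₀(β,1)/A²)` represents `1`
over the rational integers, say at `(t,u)`, then
`P ⊖ ((A²t+βu)/A, u/A)` is an algebraic integer point of the Pell conic, where
`P₁ ⊖ P₂ = (x₁x₂ + σx₁y₂ - my₁y₂, x₂y₁ - x₁y₂)`. -/
theorem sub_rational_point_integral (σ m : ℤ) (hσ : σ = 0 ∨ σ = 1)
    (x y : ℂ) (hP : x ^ 2 + (σ : ℂ) * x * y - (m : ℂ) * y ^ 2 = 1)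
    (A : ℕ) (hA : IsDenominator y A)
    (β γ : ℤ) (hint : IsIntegral ℤ ((x - (β : ℂ) * y) / (A : ℂ)))
    (hγ : (A : ℤ) ^ 2 * γ = β ^ 2 + σ * β - m)
    (t u : ℤ) (hQ : (A : ℤ) ^ 2 * t ^ 2 + (2 * β + σ) * t * u + γ * u ^ 2 = 1) :
    IsIntegral ℤ (x * (((A : ℂ) ^ 2 * t + β * u) / A)
        + (σ : ℂ) * x * ((u : ℂ) / A) - (m : ℂ) * y * ((u : ℂ) / A)) ∧
    IsIntegral ℤ ((((A : ℂ) ^ 2 * t + β * u) / A) * y - x * ((u : ℂ) / A)) ∧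
    (x * (((A : ℂ) ^ 2 * t + β * u) / A)
        + (σ : ℂ) * x * ((u : ℂ) / A) - (m : ℂ) * y * ((u : ℂ) / A)) ^ 2
      + (σ : ℂ) * (x * (((A : ℂ) ^ 2 * t + β * u) / A)
          + (σ : ℂ) * x * ((u : ℂ) / A) - (m : ℂ) * y * ((u : ℂ) / A))
        * ((((A : ℂ) ^ 2 * t + β * u) / A) * y - x * ((u : ℂ) / A))
      - (m : ℂ) * ((((A : ℂ) ^ 2 * t + β * u) / A) * y - x * ((u : ℂ) / A)) ^ 2
      = 1 := by
  obtain ⟨⟨hApos, hAy⟩, -⟩ := hA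
  have hAne : (A : ℂ) ≠ 0 := by
    exact_mod_cast Nat.cast_ne_zero.mpr hApos.ne'
  have hQ' : (A : ℂ) ^ 2 * t ^ 2 + (2 * β + σ) * t * u + γ * u ^ 2 = 1 := by
    exact_mod_cast congrArg (Int.cast : ℤ → ℂ) hQ
  have hγ' : (A : ℂ) ^ 2 * γ = β ^ 2 + σ * β - m := by
    exact_mod_cast congrArg (Int.cast : ℤ → ℂ) hγ
  have hzint : ∀ z : ℤ, IsIntegral ℤ ((z : ℂ)) := fun z => isIntegral_algebraMap (x := z)
  refine ⟨?_, ?_, ?_⟩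
  · have heq : x * (((A : ℂ) ^ 2 * t + β * u) / A)
        + (σ : ℂ) * x * ((u : ℂ) / A) - (m : ℂ) * y * ((u : ℂ) / A)
        = ((((A:ℤ)^2 * t + (β + σ) * u : ℤ) : ℂ)) * ((x - (β : ℂ) * y) / (A : ℂ))
          + (((t * β + u * γ : ℤ) : ℂ)) * ((A : ℂ) * y) := by
      push_cast
      field_simp
      linear_combination (-(u:ℂ) * y) * hγ'
    rw [heq]
    exact ((hzint _).mul hint).add ((hzint _).mul hAy)
  · have heq : (((A : ℂ) ^ 2 * t + β * u) / A) * y - x * ((u : ℂ) / A)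
        = ((t : ℂ)) * ((A : ℂ) * y) + (((-u : ℤ) : ℂ)) * ((x - (β : ℂ) * y) / (A : ℂ)) := by
      push_cast
      field_simp
      ring
    rw [heq]
    exact ((hzint t).mul hAy).add ((hzint _).mul hint)
  · have hN2 : (((A : ℂ) ^ 2 * t + β * u) / A) ^ 2
        + (σ : ℂ) * (((A : ℂ) ^ 2 * t + β * u) / A) * ((u : ℂ) / A)
        - (m : ℂ) * ((u : ℂ) / A) ^ 2 = 1 := by
      field_simp
      linear_combination ((A : ℂ))^2 * hQ' - (u : ℂ)^2 * hγ'
    linear_combination ((((A : ℂ) ^ 2 * t + β * u) / A) ^ 2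
        + (σ : ℂ) * (((A : ℂ) ^ 2 * t + β * u) / A) * ((u : ℂ) / A)
        - (m : ℂ) * ((u : ℂ) / A) ^ 2) * hP + hN2
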